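/- arXiv:0708.0656 — 3 statements merged into one kernel-verified Lean document; each statement's English description precedes it below -/
import Mathlib

section
/- Fix q ≥ 2, 0 ≤ t ≤ q^{k} − 1, k ≥ 0, and let π be a uniformly random permutation of {0,...,q−1}. For distinct c₁, c₂, c₃, c₄ ∈ {0,...,q−1} and a fixed a ∈ {0,...,q−1}, E[∏_{i=1}^{4} ψ_{0,0,c_i}(π(a)/q)] = −3/q². -/
/-- The level-zero base-`q` Haar function
`ψ_{0,0,c}(x) = √q·𝟙{x ∈ [c/q,(c+1)/q)} − (1/√q)·𝟙{x ∈ [0,1)}`. -/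
noncomputable def psi0 (q : ℕ) (c : Fin q) (x : ℝ) : ℝ :=
  Real.sqrt q * (if x ∈ Set.Ico ((c : ℝ) / q) (((c : ℝ) + 1) / q) then 1 else 0)
    - (1 / Real.sqrt q) * (if x ∈ Set.Ico (0 : ℝ) 1 then 1 else 0)

lemma psi0_eval' (q : ℕ) (hq : 1 ≤ q) (d b : Fin q) :
    psi0 q d ((b : ℕ) / (q : ℝ)) =
      if b = d then Real.sqrt q - 1 / Real.sqrt q else -(1 / Real.sqrt q) := by
  have hq0 : (0 : ℝ) < q := by exact_mod_cast hq
  have h01 : ((b : ℕ) : ℝ) / q ∈ Set.Ico (0 : ℝ) 1 := by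
    constructor
    · positivity
    · rw [div_lt_one hq0]; exact_mod_cast b.isLt
  have hmem : (((b : ℕ) : ℝ) / q ∈ Set.Ico ((d : ℝ) / q) (((d : ℝ) + 1) / q)) ↔ b = d := by
    constructor
    · rintro ⟨h1, h2⟩
      rw [div_le_div_iff_of_pos_right hq0] at h1
      rw [div_lt_div_iff_of_pos_right hq0] at h2
      have h1' : (d : ℕ) ≤ (b : ℕ) := by exact_mod_cast h1
      have h2' : (b : ℕ) < (d : ℕ) + 1 := by exact_mod_cast h2
      exact Fin.ext (by omega)
    · rintro rfl
      constructor
      · exact le_refl _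
      · rw [div_lt_div_iff_of_pos_right hq0]; linarith
  unfold psi0
  by_cases h : b = d
  · rw [if_pos (hmem.mpr h), if_pos h01, if_pos h]; ring
  · rw [if_neg (fun hm => h (hmem.mp hm)), if_pos h01, if_neg h]; ring

lemma perm_fiber_card (q : ℕ) (hq : 1 ≤ q) (a b : Fin q) :
    (Finset.univ.filter fun π : Equiv.Perm (Fin q) => π a = b).card = (q - 1).factorial := by
  have hcongr : ∀ b b' : Fin q,
      (Finset.univ.filter fun π : Equiv.Perm (Fin q) => π a = b).card =
      (Finset.univ.filter fun π : Equiv.Perm (Fin q) => π a = b').card := by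
    intro b b'
    apply Finset.card_bij (fun π _ => Equiv.swap b b' * π)
    · intro π hπ
      simp only [Finset.mem_filter, Finset.mem_univ, true_and] at hπ ⊢
      simp [hπ]
    · intro π hπ σ hσ h
      exact mul_left_cancel h
    · intro σ hσ
      simp only [Finset.mem_filter, Finset.mem_univ, true_and] at hσ
      refine ⟨Equiv.swap b b' * σ, ?_, ?_⟩
      · simp [hσ, Equiv.swap_apply_right]
      · rw [← mul_assoc, Equiv.swap_mul_self, one_mul]
  have hsum : ∑ b' : Fin q,
      (Finset.univ.filter fun π : Equiv.Perm (Fin q) => π a = b').card = q.factorial := by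
    rw [← Finset.card_eq_sum_card_fiberwise (f := fun π : Equiv.Perm (Fin q) => π a)
      (fun π _ => Finset.mem_univ _)]
    simp [Fintype.card_perm]
  have key : q * (Finset.univ.filter fun π : Equiv.Perm (Fin q) => π a = b).card
      = q.factorial := by
    rw [← hsum, Finset.sum_congr rfl (fun b' _ => hcongr b' b)]
    simp [Finset.sum_const, mul_comm]
  have hq' : q = (q - 1) + 1 := (Nat.succ_pred_eq_of_pos hq).symm
  have hfac : q.factorial = q * (q - 1).factorial := by
    conv_lhs => rw [hq']
    rw [Nat.factorial_succ, ← hq']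
  exact Nat.eq_of_mul_eq_mul_left hq (by rw [key, hfac])

/-- For pairwise distinct `c₁,c₂,c₃,c₄` and a uniformly random permutation `π`,
`E[∏_{i=1}^4 ψ_{0,0,c_i}(π(a)/q)] = -3/q²`. -/
theorem psi0_fourth_mixed (q : ℕ) (hq : 2 ≤ q) (c : Fin 4 → Fin q)
    (hc : Function.Injective c) (a : Fin q) :
    (∑ π : Equiv.Perm (Fin q), ∏ i : Fin 4, psi0 q (c i) ((π a : ℕ) / (q : ℝ)))
        / (q.factorial : ℝ)
      = -3 / (q : ℝ) ^ 2 := by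
  have hq1 : 1 ≤ q := by omega
  have hq4 : 4 ≤ q := by
    have := Fintype.card_le_of_injective c hc
    simpa using this
  have hq0 : (0 : ℝ) < q := by exact_mod_cast hq1
  set s : ℝ := Real.sqrt q with hs
  have hs0 : 0 < s := Real.sqrt_pos.mpr hq0
  have hs2 : s ^ 2 = q := Real.sq_sqrt hq0.le
  set A : ℝ := s - 1 / s with hA
  set B : ℝ := -(1 / s) with hB
  set S : Finset (Fin q) := Finset.univ.image c with hS
  have hcardS : S.card = 4 := by
    rw [hS, Finset.card_image_of_injective _ hc]; simp
  -- value of the product as a function of b = π a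
  have hG : ∀ b : Fin q, (∏ i : Fin 4, psi0 q (c i) ((b : ℕ) / (q : ℝ)))
      = if b ∈ S then A * B ^ 3 else B ^ 4 := by
    intro b
    have heval : ∀ i : Fin 4, psi0 q (c i) ((b : ℕ) / (q : ℝ))
        = if b = c i then A else B := fun i => psi0_eval' q hq1 (c i) b
    by_cases hb : b ∈ S
    · rw [if_pos hb]
      obtain ⟨i0, -, hi0⟩ := Finset.mem_image.mp hb
      rw [← Finset.mul_prod_erase Finset.univ _ (Finset.mem_univ i0)]
      have h1 : psi0 q (c i0) ((b : ℕ) / (q : ℝ)) = A := by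
        rw [heval i0, if_pos hi0.symm]
      have h2 : ∀ i ∈ Finset.univ.erase i0, psi0 q (c i) ((b : ℕ) / (q : ℝ)) = B := by
        intro i hi
        rw [heval i, if_neg]
        intro hbc
        exact (Finset.mem_erase.mp hi).1 (hc (by rw [← hbc, hi0]))
      rw [h1, Finset.prod_congr rfl h2, Finset.prod_const]
      congr 1
      rw [Finset.card_erase_of_mem (Finset.mem_univ i0)]
      simp
    · rw [if_neg hb]
      have h2 : ∀ i ∈ Finset.univ, psi0 q (c i) ((b : ℕ) / (q : ℝ)) = B := by
        intro i _
        rw [heval i, if_neg]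
        intro hbc
        exact hb (Finset.mem_image.mpr ⟨i, Finset.mem_univ i, hbc.symm⟩)
      rw [Finset.prod_congr rfl h2, Finset.prod_const]
      norm_num
  -- group the sum over permutations by the value of π a
  have hgroup : (∑ π : Equiv.Perm (Fin q), ∏ i : Fin 4, psi0 q (c i) ((π a : ℕ) / (q : ℝ)))
      = ((q - 1).factorial : ℝ) * ∑ b : Fin q, (if b ∈ S then A * B ^ 3 else B ^ 4) := by
    rw [← Finset.sum_fiberwise_of_maps_to
      (g := fun π : Equiv.Perm (Fin q) => π a)
      (fun (π : Equiv.Perm (Fin q)) (_ : π ∈ Finset.univ) => Finset.mem_univ (π a))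
      (fun π : Equiv.Perm (Fin q) => ∏ i : Fin 4, psi0 q (c i) ((π a : ℕ) / (q : ℝ)))]
    rw [Finset.mul_sum]
    refine Finset.sum_congr rfl fun b _ => ?_
    have : ∀ π ∈ Finset.univ.filter fun π : Equiv.Perm (Fin q) => π a = b,
        (∏ i : Fin 4, psi0 q (c i) ((π a : ℕ) / (q : ℝ)))
          = if b ∈ S then A * B ^ 3 else B ^ 4 := by
      intro π hπ
      have hπa : π a = b := (Finset.mem_filter.mp hπ).2
      rw [hπa, hG b]
    rw [Finset.sum_congr rfl this, Finset.sum_const, perm_fiber_card q hq1 a b,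
      nsmul_eq_mul]
  -- evaluate the inner sum
  have hsumG : (∑ b : Fin q, (if b ∈ S then A * B ^ 3 else B ^ 4))
      = 4 * (A * B ^ 3) + ((q : ℝ) - 4) * B ^ 4 := by
    rw [← Finset.sum_add_sum_compl S]
    have h1 : ∑ b ∈ S, (if b ∈ S then A * B ^ 3 else B ^ 4) = 4 * (A * B ^ 3) := by
      rw [Finset.sum_congr rfl (fun b hb => if_pos hb), Finset.sum_const, hcardS,
        nsmul_eq_mul]
      norm_num
    have h2 : ∑ b ∈ Sᶜ, (if b ∈ S then A * B ^ 3 else B ^ 4) = ((q : ℝ) - 4) * B ^ 4 := by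
      rw [Finset.sum_congr rfl (fun b hb => if_neg (Finset.mem_compl.mp hb)),
        Finset.sum_const, nsmul_eq_mul]
      congr 1
      rw [Finset.card_compl, hcardS]
      simp only [Fintype.card_fin]
      push_cast [Nat.cast_sub hq4]
      ring
    rw [h1, h2]
  -- algebraic values
  have hAB3 : A * B ^ 3 = -((q : ℝ) - 1) / (q : ℝ) ^ 2 := by
    rw [hA, hB]
    have : (q : ℝ) = s ^ 2 := hs2.symm
    rw [this]
    field_simp
  have hB4 : B ^ 4 = 1 / (q : ℝ) ^ 2 := by
    rw [hB]
    have : (q : ℝ) = s ^ 2 := hs2.symm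
    rw [this]
    field_simp
  have hfac : (q.factorial : ℝ) = (q : ℝ) * ((q - 1).factorial : ℝ) := by
    have hq' : q = (q - 1) + 1 := by omega
    rw [show q.factorial = q * (q - 1).factorial by
      conv_lhs => rw [hq']
      rw [Nat.factorial_succ, ← hq']]
    push_cast
    ring
  have hfacpos : (0 : ℝ) < ((q - 1).factorial : ℝ) := by
    exact_mod_cast Nat.factorial_pos (q - 1)
  rw [hgroup, hsumG, hAB3, hB4, hfac]
  field_simp
  ring
end

section
/- Let q ≥ 2, let u₁,...,u_m be uniformly random on {0,...,q−1} and suppose g : {0,...,q−1}^m → ℝ satisfies ∑_{c=0}^{q−1} g(c₁,...,c_{k−1}, c, c_{k+1},...,c_m) = 0 for every coordinate k and every choice of the other coordinates. Then for independent uniformly random permutations π₁,...,π_m of {0,...,q−1} and any fixed a₁,...,a_m, a'₁,...,a'_m ∈ {0,...,q−1} with a_k ≠ a'_k for all k = 1,...,m, E[g(π₁(a₁),...,π_m(a_m)) g(π₁(a'₁),...,π_m(a'_m))] = (−1/(q−1))^m E[g(π₁(a₁),...,π_m(a_m))²]. -/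
open Finset

/-- One-coordinate key lemma: for a zero-sum `H` and `u ≠ v`,
`∑_σ G(σ u) H(σ v) = −1/(q−1) · ∑_σ G(σ u) H(σ u)`. -/
lemma key_one (q : ℕ) (hq : 2 ≤ q) (G H : Fin q → ℝ) (hH : ∑ x : Fin q, H x = 0)
    (u v : Fin q) (huv : u ≠ v) :
    ∑ σ : Equiv.Perm (Fin q), G (σ u) * H (σ v)
      = (-(1 / ((q : ℝ) - 1))) * ∑ σ : Equiv.Perm (Fin q), G (σ u) * H (σ u) := by
  have hq2 : (2:ℝ) ≤ (q:ℝ) := by exact_mod_cast hq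
  have hqsub : (q:ℝ) - 1 ≠ 0 := by linarith
  -- Step 1: the sum does not depend on v' as long as v' ≠ u
  have hsame : ∀ v' : Fin q, v' ≠ u →
      ∑ σ : Equiv.Perm (Fin q), G (σ u) * H (σ v')
        = ∑ σ : Equiv.Perm (Fin q), G (σ u) * H (σ v) := by
    intro v' hv'
    calc ∑ σ : Equiv.Perm (Fin q), G (σ u) * H (σ v')
        = ∑ σ : Equiv.Perm (Fin q),
            G ((σ * Equiv.swap v v') u) * H ((σ * Equiv.swap v v') v) := by
          refine Fintype.sum_congr _ _ (fun σ => ?_)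
          have hu : Equiv.swap v v' u = u :=
            Equiv.swap_apply_of_ne_of_ne huv (Ne.symm hv')
          have hv : Equiv.swap v v' v = v' := Equiv.swap_apply_left v v'
          simp [Equiv.Perm.mul_apply, hu, hv]
      _ = ∑ σ : Equiv.Perm (Fin q), G (σ u) * H (σ v) :=
          Equiv.sum_comp (Equiv.mulRight (Equiv.swap v v'))
            (fun σ => G (σ u) * H (σ v))
  -- Step 2: inner sum over v' ≠ u
  have hinner : ∀ σ : Equiv.Perm (Fin q), ∑ v' ∈ ({u}ᶜ : Finset (Fin q)), H (σ v') = - H (σ u) := by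
    intro σ
    have h1 : ∑ v' ∈ ({u}ᶜ : Finset (Fin q)), H (σ v') + ∑ v' ∈ ({u} : Finset (Fin q)), H (σ v')
        = ∑ v' : Fin q, H (σ v') := Finset.sum_compl_add_sum {u} _
    have h2 : ∑ v' : Fin q, H (σ v') = 0 := by
      rw [Equiv.sum_comp σ H]; exact hH
    simp only [Finset.sum_singleton] at h1
    linarith
  -- Step 3: combine
  have hcard : ({u}ᶜ : Finset (Fin q)).card = q - 1 := by
    simp [Finset.card_compl]
  have hmain : ((q:ℝ) - 1) * ∑ σ : Equiv.Perm (Fin q), G (σ u) * H (σ v)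
      = - ∑ σ : Equiv.Perm (Fin q), G (σ u) * H (σ u) := by
    have h3 : ∑ v' ∈ ({u}ᶜ : Finset (Fin q)), ∑ σ : Equiv.Perm (Fin q), G (σ u) * H (σ v')
        = ((q:ℝ) - 1) * ∑ σ : Equiv.Perm (Fin q), G (σ u) * H (σ v) := by
      rw [Finset.sum_congr rfl (fun v' hv' => hsame v' (by simpa using hv'))]
      rw [Finset.sum_const, hcard, nsmul_eq_mul]
      congr 1
      have : (1:ℕ) ≤ q := by omega
      push_cast [Nat.cast_sub this]
      ring
    have h4 : ∑ v' ∈ ({u}ᶜ : Finset (Fin q)), ∑ σ : Equiv.Perm (Fin q), G (σ u) * H (σ v')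
        = ∑ σ : Equiv.Perm (Fin q), G (σ u) * (∑ v' ∈ ({u}ᶜ : Finset (Fin q)), H (σ v')) := by
      rw [Finset.sum_comm]
      exact Finset.sum_congr rfl (fun σ _ => (Finset.mul_sum _ _ _).symm)
    rw [h4, Finset.sum_congr rfl (fun σ _ => by rw [hinner σ])] at h3
    rw [← h3]
    rw [← Finset.sum_neg_distrib]
    exact Finset.sum_congr rfl (fun σ _ => by ring)
  field_simp
  linarith

/-- Main induction: flipping the second argument from `a` to `a'` on a finite set `s` of
coordinates multiplies the covariance sum by `(−1/(q−1))^|s|`. -/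
lemma perm_anova_aux (q m : ℕ) (hq : 2 ≤ q)
    (g : (Fin m → Fin q) → ℝ)
    (hg : ∀ (k : Fin m) (c : Fin m → Fin q), ∑ x : Fin q, g (Function.update c k x) = 0)
    (a a' : Fin m → Fin q) (ha : ∀ k, a k ≠ a' k) (s : Finset (Fin m)) :
    ∑ π : Fin m → Equiv.Perm (Fin q),
        g (fun k => π k (a k)) * g (fun k => π k (if k ∈ s then a' k else a k))
      = (-(1 / ((q : ℝ) - 1))) ^ s.card *
        ∑ π : Fin m → Equiv.Perm (Fin q),
          g (fun k => π k (a k)) * g (fun k => π k (a k)) := by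
  induction s using Finset.induction_on with
  | empty => simp
  | @insert k s hk ih =>
    classical
    set c : ℝ := -(1 / ((q : ℝ) - 1)) with hc
    set e := Equiv.funSplitAt k (Equiv.Perm (Fin q)) with he
    -- split sums at coordinate k
    have split : ∀ b : Fin m → Fin q,
        ∑ π : Fin m → Equiv.Perm (Fin q),
            g (fun j => π j (a j)) * g (fun j => π j (b j))
          = ∑ ρ : {j : Fin m // j ≠ k} → Equiv.Perm (Fin q),
              ∑ σ : Equiv.Perm (Fin q),
                g (fun j => (e.symm (σ, ρ)) j (a j)) * g (fun j => (e.symm (σ, ρ)) j (b j)) := by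
      intro b
      rw [← Equiv.sum_comp e.symm
        (fun π => g (fun j => π j (a j)) * g (fun j => π j (b j)))]
      rw [Fintype.sum_prod_type_right]
    -- base functions
    have hupdate : ∀ (σ : Equiv.Perm (Fin q)) (ρ : {j : Fin m // j ≠ k} → Equiv.Perm (Fin q))
        (b : Fin m → Fin q) (C : Fin m → Fin q),
        (∀ j (h : j ≠ k), C j = ρ ⟨j, h⟩ (b j)) →
        (fun j => (e.symm (σ, ρ)) j (b j)) = Function.update C k (σ (b k)) := by
      intro σ ρ b C hC
      funext j
      by_cases h : j = k
      · subst h; simp [he, Equiv.funSplitAt, Equiv.piSplitAt]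
      · simp [he, Equiv.funSplitAt, Equiv.piSplitAt, h, Function.update_of_ne h, hC j h]
    have hss : ∀ j, j ≠ k → ((j ∈ insert k s) = (j ∈ s)) := by
      intro j h; simp [Finset.mem_insert, h]
    calc ∑ π : Fin m → Equiv.Perm (Fin q),
            g (fun j => π j (a j)) * g (fun j => π j (if j ∈ insert k s then a' j else a j))
        = ∑ ρ : {j : Fin m // j ≠ k} → Equiv.Perm (Fin q),
            ∑ σ : Equiv.Perm (Fin q),
              g (fun j => (e.symm (σ, ρ)) j (a j)) *
              g (fun j => (e.symm (σ, ρ)) j (if j ∈ insert k s then a' j else a j)) :=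
          split _
      _ = c * ∑ ρ : {j : Fin m // j ≠ k} → Equiv.Perm (Fin q),
            ∑ σ : Equiv.Perm (Fin q),
              g (fun j => (e.symm (σ, ρ)) j (a j)) *
              g (fun j => (e.symm (σ, ρ)) j (if j ∈ s then a' j else a j)) := by
          rw [Finset.mul_sum]
          refine Finset.sum_congr rfl (fun ρ _ => ?_)
          set Ca : Fin m → Fin q := fun j => if h : j ≠ k then ρ ⟨j, h⟩ (a j) else a k with hCa
          set Cb : Fin m → Fin q :=
            fun j => if h : j ≠ k then ρ ⟨j, h⟩ (if j ∈ s then a' j else a j) else a k with hCb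
          have hCa' : ∀ j (h : j ≠ k), Ca j = ρ ⟨j, h⟩ (a j) := by
            intro j h; simp [hCa, h]
          have hCb' : ∀ j (h : j ≠ k), Cb j = ρ ⟨j, h⟩ (if j ∈ s then a' j else a j) := by
            intro j h; simp [hCb, h]
          have e1 : ∀ σ : Equiv.Perm (Fin q),
              (fun j => (e.symm (σ, ρ)) j (a j)) = Function.update Ca k (σ (a k)) :=
            fun σ => hupdate σ ρ a Ca hCa'
          have e2 : ∀ σ : Equiv.Perm (Fin q),
              (fun j => (e.symm (σ, ρ)) j (if j ∈ insert k s then a' j else a j))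
                = Function.update Cb k (σ (a' k)) := by
            intro σ
            have := hupdate σ ρ (fun j => if j ∈ insert k s then a' j else a j)
              (Function.update Cb k (a' k)) ?_
            · rw [this]
              rw [Function.update_idem]
              congr 1
              simp [Finset.mem_insert]
            · intro j h
              rw [Function.update_of_ne h, hCb' j h]
              congr 1
              simp [Finset.mem_insert, h]
          have e3 : ∀ σ : Equiv.Perm (Fin q),
              (fun j => (e.symm (σ, ρ)) j (if j ∈ s then a' j else a j))
                = Function.update Cb k (σ (a k)) := by
            intro σ
            have := hupdate σ ρ (fun j => if j ∈ s then a' j else a j) Cb ?_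
            · rw [this]
              congr 1
              simp [hk]
            · intro j h; simpa using hCb' j h
          have key := key_one q hq (fun x => g (Function.update Ca k x))
            (fun x => g (Function.update Cb k x)) (hg k Cb) (a k) (a' k) (ha k)
          calc ∑ σ : Equiv.Perm (Fin q),
                g (fun j => (e.symm (σ, ρ)) j (a j)) *
                g (fun j => (e.symm (σ, ρ)) j (if j ∈ insert k s then a' j else a j))
              = ∑ σ : Equiv.Perm (Fin q),
                  g (Function.update Ca k (σ (a k))) * g (Function.update Cb k (σ (a' k))) := by
                refine Fintype.sum_congr _ _ (fun σ => ?_)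
                rw [e1 σ, e2 σ]
            _ = c * ∑ σ : Equiv.Perm (Fin q),
                  g (Function.update Ca k (σ (a k))) * g (Function.update Cb k (σ (a k))) := key
            _ = c * ∑ σ : Equiv.Perm (Fin q),
                g (fun j => (e.symm (σ, ρ)) j (a j)) *
                g (fun j => (e.symm (σ, ρ)) j (if j ∈ s then a' j else a j)) := by
                congr 1
                refine Fintype.sum_congr _ _ (fun σ => ?_)
                rw [e1 σ, e3 σ]
      _ = c * ∑ π : Fin m → Equiv.Perm (Fin q),
            g (fun j => π j (a j)) * g (fun j => π j (if j ∈ s then a' j else a j)) := by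
          rw [← split]
      _ = c ^ (insert k s).card *
          ∑ π : Fin m → Equiv.Perm (Fin q),
            g (fun j => π j (a j)) * g (fun j => π j (a j)) := by
          rw [ih, Finset.card_insert_of_notMem hk, pow_succ]
          ring

/-- For independent uniformly random permutations `π₁,…,π_m` of `{0,…,q−1}`, a function
`g` with the zero-sum (ANOVA) property in each coordinate, and fixed `a_k ≠ a'_k` for all
`k`, `E[g(π₁(a₁),…,π_m(a_m)) g(π₁(a'₁),…,π_m(a'_m))] = (−1/(q−1))^m E[g(π₁(a₁),…)²]`. -/
theorem perm_anova_covariance_all_distinct (q m : ℕ) (hq : 2 ≤ q) (hm : 1 ≤ m)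
    (g : (Fin m → Fin q) → ℝ)
    (hg : ∀ (k : Fin m) (c : Fin m → Fin q), ∑ x : Fin q, g (Function.update c k x) = 0)
    (a a' : Fin m → Fin q) (ha : ∀ k, a k ≠ a' k) :
    (∑ π : Fin m → Equiv.Perm (Fin q),
        g (fun k => π k (a k)) * g (fun k => π k (a' k))) / ((q.factorial : ℝ) ^ m)
      = (-(1 / ((q : ℝ) - 1))) ^ m *
        ((∑ π : Fin m → Equiv.Perm (Fin q), g (fun k => π k (a k)) ^ 2)
          / ((q.factorial : ℝ) ^ m)) := by
  have h := perm_anova_aux q m hq g hg a a' ha Finset.univ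
  simp only [Finset.mem_univ, if_true, Finset.card_univ, Fintype.card_fin] at h
  rw [h, mul_div_assoc]
  congr 2
  exact Finset.sum_congr rfl (fun π _ => (sq _).symm)
end

section
/- Let q ≥ 2, m ≥ 1, let g : {0,...,q−1}^m → ℝ satisfy the zero-sum property in each coordinate, and let π₁,...,π_m be independent uniformly random permutations of {0,...,q−1}. Fix a₁,...,a_m and a'₁,...,a'_m in {0,...,q−1} with a₁ = a'₁ but a_k ≠ a'_k for k = 2,...,m. Then E[g(π₁(a₁),...,π_m(a_m)) g(π₁(a'₁),...,π_m(a'_m))] = (−1/(q−1))^{m−1} E[g(π₁(a₁),...,π_m(a_m))²]. -/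
lemma exists_perm_map_pair {α : Type*} [DecidableEq α] {b b' c c' : α}
    (h1 : b ≠ b') (h2 : c ≠ c') : ∃ τ : Equiv.Perm α, τ c = b ∧ τ c' = b' := by
  set y := Equiv.swap c b c' with hy
  have hyb : y ≠ b := by
    intro h
    apply h2
    have := congrArg (Equiv.swap c b) h
    rw [hy, Equiv.swap_apply_self, Equiv.swap_apply_right] at this
    exact this.symm
  refine ⟨(Equiv.swap y b') * (Equiv.swap c b), ?_, ?_⟩
  · rw [Equiv.Perm.mul_apply, Equiv.swap_apply_left,
      Equiv.swap_apply_of_ne_of_ne (Ne.symm hyb) h1]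
  · rw [Equiv.Perm.mul_apply, ← hy, Equiv.swap_apply_left]

lemma sum_perm_reindex {α : Type*} [DecidableEq α] [Fintype α]
    (F G : α → ℝ) (τ : Equiv.Perm α) (b b' : α) :
    ∑ σ : Equiv.Perm α, F (σ (τ b)) * G (σ (τ b'))
      = ∑ σ : Equiv.Perm α, F (σ b) * G (σ b') :=
  Fintype.sum_equiv (Equiv.mulRight τ) _ _ (fun σ => by simp [Equiv.Perm.mul_apply])

lemma sum_perm_pair {q : ℕ} (hq : 2 ≤ q) (F G : Fin q → ℝ) (hF : ∑ x, F x = 0)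
    {b b' : Fin q} (hbb : b ≠ b') :
    ∑ σ : Equiv.Perm (Fin q), F (σ b) * G (σ b')
      = -(1/((q:ℝ)-1)) * ∑ σ : Equiv.Perm (Fin q), F (σ b) * G (σ b) := by
  set S : Fin q → Fin q → ℝ := fun c c' => ∑ σ : Equiv.Perm (Fin q), F (σ c) * G (σ c') with hS
  have hoff : ∀ c c' : Fin q, c ≠ c' → S c c' = S b b' := by
    intro c c' hcc
    obtain ⟨τ, hτ1, hτ2⟩ := exists_perm_map_pair hcc hbb
    rw [hS]; dsimp only
    rw [← hτ1, ← hτ2, sum_perm_reindex]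
  have hdiag : ∀ c : Fin q, S c c = S b b := by
    intro c
    have := sum_perm_reindex F G (Equiv.swap b c) b b
    rwa [Equiv.swap_apply_left] at this
  have htot : ∑ c : Fin q, ∑ c' : Fin q, S c c' = 0 := by
    have hFσ : ∀ σ : Equiv.Perm (Fin q), ∑ c : Fin q, F (σ c) = 0 := fun σ => by
      rw [Equiv.sum_comp σ F]; exact hF
    have step1 : ∀ c, ∑ c' : Fin q, S c c'
        = ∑ σ : Equiv.Perm (Fin q), F (σ c) * ∑ c' : Fin q, G (σ c') := by
      intro c
      rw [hS]; dsimp only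
      rw [Finset.sum_comm]
      exact Finset.sum_congr rfl fun σ _ => (Finset.mul_sum _ _ _).symm
    rw [Finset.sum_congr rfl fun c _ => step1 c, Finset.sum_comm]
    refine Finset.sum_eq_zero fun σ _ => ?_
    rw [← Finset.sum_mul, hFσ σ, zero_mul]
  have hq1 : (0:ℝ) < (q:ℝ) - 1 := by
    have : (2:ℝ) ≤ (q:ℝ) := by exact_mod_cast hq
    linarith
  have hkey : ∀ c : Fin q, ∑ c' : Fin q, S c c' = S c c + ((q:ℝ) - 1) * S b b' := by
    intro c
    rw [← Finset.add_sum_erase _ _ (Finset.mem_univ c)]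
    congr 1
    have h1 : ∀ c' ∈ Finset.univ.erase c, S c c' = S b b' := fun c' hc' =>
      hoff c c' (Ne.symm (Finset.mem_erase.mp hc').1)
    rw [Finset.sum_congr rfl h1, Finset.sum_const, Finset.card_erase_of_mem (Finset.mem_univ c)]
    simp only [Finset.card_univ, Fintype.card_fin, nsmul_eq_mul]
    congr 1
    have hq1' : 1 ≤ q := le_trans one_le_two hq
    push_cast [Nat.cast_sub hq1']
    ring
  have hconst : ∑ c : Fin q, (S c c + ((q:ℝ)-1) * S b b')
      = (q:ℝ) * (S b b + ((q:ℝ)-1) * S b b') := by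
    rw [Finset.sum_congr rfl fun c _ => by rw [hdiag c], Finset.sum_const]
    simp [Finset.card_univ, nsmul_eq_mul]
    ring
  have h0 : (q:ℝ) * (S b b + ((q:ℝ)-1) * S b b') = 0 := by
    rw [← hconst, Finset.sum_congr rfl fun c _ => (hkey c).symm]
    exact htot
  have hqne : (q:ℝ) ≠ 0 := by positivity
  rcases mul_eq_zero.mp h0 with h | h
  · exact absurd h hqne
  · show S b b' = -(1/((q:ℝ)-1)) * S b b
    field_simp
    linarith

lemma perm_split (q m : ℕ) (g : (Fin m → Fin q) → ℝ) (k : Fin m) (a b : Fin m → Fin q) :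
    ∑ π : Fin m → Equiv.Perm (Fin q), g (fun j => π j (a j)) * g (fun j => π j (b j))
    = ∑ r : {j : Fin m // j ≠ k} → Equiv.Perm (Fin q), ∑ σ : Equiv.Perm (Fin q),
        g (Function.update (fun j => if h : j = k then a k else r ⟨j, h⟩ (a j)) k (σ (a k)))
        * g (Function.update (fun j => if h : j = k then b k else r ⟨j, h⟩ (b j)) k (σ (b k))) := by
  classical
  set e := Equiv.funSplitAt k (Equiv.Perm (Fin q)) with he
  rw [← Equiv.sum_comp e.symm
    (fun π => g (fun j => π j (a j)) * g (fun j => π j (b j))), Fintype.sum_prod_type,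
    Finset.sum_comm]
  refine Finset.sum_congr rfl fun r _ => Finset.sum_congr rfl fun σ _ => ?_
  have key : ∀ (c : Fin m → Fin q),
      (fun j => (e.symm (σ, r)) j (c j))
        = Function.update (fun j => if h : j = k then c k else r ⟨j, h⟩ (c j)) k (σ (c k)) := by
    intro c
    funext j
    by_cases hj : j = k
    · subst hj
      simp [he, Equiv.funSplitAt, Equiv.piSplitAt, Function.update]
    · simp [he, Equiv.funSplitAt, Equiv.piSplitAt, Function.update, hj]
  rw [key a, key b]

lemma perm_main (q : ℕ) (hq : 2 ≤ q) (m : ℕ) (g : (Fin m → Fin q) → ℝ)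
    (hg : ∀ (k : Fin m) (c : Fin m → Fin q), ∑ x : Fin q, g (Function.update c k x) = 0)
    (a : Fin m → Fin q) :
    ∀ (n : ℕ) (b : Fin m → Fin q), (Finset.univ.filter fun k => a k ≠ b k).card = n →
    ∑ π : Fin m → Equiv.Perm (Fin q), g (fun j => π j (a j)) * g (fun j => π j (b j))
      = (-(1/((q:ℝ)-1)))^n
          * ∑ π : Fin m → Equiv.Perm (Fin q), g (fun j => π j (a j))^2 := by
  intro n
  induction n with
  | zero =>
    intro b hb
    have hab : a = b := by
      funext j
      by_contra hj
      have : j ∈ Finset.univ.filter fun k => a k ≠ b k := by simp [hj]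
      rw [Finset.card_eq_zero.mp hb] at this
      exact absurd this (Finset.notMem_empty j)
    subst hab
    rw [pow_zero, one_mul]
    exact Finset.sum_congr rfl fun π _ => (sq _).symm
  | succ n ih =>
    intro b hb
    have hne : (Finset.univ.filter fun k => a k ≠ b k).Nonempty := by
      rw [← Finset.card_pos, hb]; exact Nat.succ_pos n
    obtain ⟨k, hk⟩ := hne
    have hkab : a k ≠ b k := (Finset.mem_filter.mp hk).2
    set b' := Function.update b k (a k) with hb'
    have hD' : (Finset.univ.filter fun j => a j ≠ b' j).card = n := by
      have hset : (Finset.univ.filter fun j => a j ≠ b' j)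
          = (Finset.univ.filter fun j => a j ≠ b j).erase k := by
        ext j
        by_cases hj : j = k
        · subst hj
          simp [hb', Function.update_self]
        · simp [hb', Function.update_of_ne hj, hj]
      rw [hset, Finset.card_erase_of_mem hk, hb]
      rfl
    rw [perm_split q m g k a b]
    have step : ∀ r : {j : Fin m // j ≠ k} → Equiv.Perm (Fin q),
        (∑ σ : Equiv.Perm (Fin q),
          g (Function.update (fun j => if h : j = k then a k else r ⟨j, h⟩ (a j)) k (σ (a k)))
          * g (Function.update (fun j => if h : j = k then b k else r ⟨j, h⟩ (b j)) k (σ (b k))))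
        = -(1/((q:ℝ)-1)) * ∑ σ : Equiv.Perm (Fin q),
          g (Function.update (fun j => if h : j = k then a k else r ⟨j, h⟩ (a j)) k (σ (a k)))
          * g (Function.update (fun j => if h : j = k then b k else r ⟨j, h⟩ (b j)) k (σ (a k))) := by
      intro r
      exact sum_perm_pair hq
        (fun x => g (Function.update (fun j => if h : j = k then a k else r ⟨j, h⟩ (a j)) k x))
        (fun x => g (Function.update (fun j => if h : j = k then b k else r ⟨j, h⟩ (b j)) k x))
        (hg k _) hkab
    rw [Finset.sum_congr rfl fun r _ => step r, ← Finset.mul_sum]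
    have reassemble : (∑ r : {j : Fin m // j ≠ k} → Equiv.Perm (Fin q),
        ∑ σ : Equiv.Perm (Fin q),
          g (Function.update (fun j => if h : j = k then a k else r ⟨j, h⟩ (a j)) k (σ (a k)))
          * g (Function.update (fun j => if h : j = k then b k else r ⟨j, h⟩ (b j)) k (σ (a k))))
        = ∑ π : Fin m → Equiv.Perm (Fin q), g (fun j => π j (a j)) * g (fun j => π j (b' j)) := by
      rw [perm_split q m g k a b']
      refine Finset.sum_congr rfl fun r _ => Finset.sum_congr rfl fun σ _ => ?_
      congr 1
      have h1 : b' k = a k := Function.update_self k (a k) b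
      rw [h1]
      congr 1
      funext j
      by_cases hj : j = k
      · subst hj; simp [Function.update]
      · simp [Function.update, hj, hb', Function.update_of_ne hj]
    rw [reassemble, ih b' hD', pow_succ]
    ring


/-- For independent uniformly random permutations `π₁,…,π_m` of `{0,…,q−1}`, a function
`g` with the zero-sum (ANOVA) property in each coordinate, and fixed `a, a'` agreeing in
exactly one coordinate `k₀` and differing elsewhere,
`E[g(π₁(a₁),…,π_m(a_m)) g(π₁(a'₁),…,π_m(a'_m))] = (−1/(q−1))^{m−1} E[g(π₁(a₁),…)²]`. -/
theorem perm_anova_covariance_one_agreement (q m : ℕ) (hq : 2 ≤ q) (hm : 1 ≤ m)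
    (g : (Fin m → Fin q) → ℝ)
    (hg : ∀ (k : Fin m) (c : Fin m → Fin q), ∑ x : Fin q, g (Function.update c k x) = 0)
    (a a' : Fin m → Fin q) (k₀ : Fin m) (hk₀ : a k₀ = a' k₀)
    (ha : ∀ k, k ≠ k₀ → a k ≠ a' k) :
    (∑ π : Fin m → Equiv.Perm (Fin q),
        g (fun k => π k (a k)) * g (fun k => π k (a' k))) / ((q.factorial : ℝ) ^ m)
      = (-(1 / ((q : ℝ) - 1))) ^ (m - 1) *
        ((∑ π : Fin m → Equiv.Perm (Fin q), g (fun k => π k (a k)) ^ 2)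
          / ((q.factorial : ℝ) ^ m)) := by
  have hcard : (Finset.univ.filter fun k => a k ≠ a' k).card = m - 1 := by
    have hset : (Finset.univ.filter fun k => a k ≠ a' k) = Finset.univ.erase k₀ := by
      ext j
      by_cases hj : j = k₀
      · subst hj; simp [hk₀]
      · simp [hj, ha j hj]
    rw [hset, Finset.card_erase_of_mem (Finset.mem_univ k₀), Finset.card_univ, Fintype.card_fin]
  have := perm_main q hq m g hg a (m - 1) a' hcard
  rw [this, mul_div_assoc]
end
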